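/- If h_k and h_{k'} are independent standard Gaussian random variables, then the random variable 2 h_k h_{k'} / sqrt(h_k^2 + h_{k'}^2) is also a standard Gaussian random variable. -/

import Mathlib

open MeasureTheory ProbabilityTheory Real Set

noncomputable def sagD (r : ℝ) : ENNReal :=
  ENNReal.ofReal (((Real.sqrt (2 * π))⁻¹) ^ 2 * Real.exp (-(r ^ 2) / 2))

lemma sag_pdf_prod (x y : ℝ) :
    gaussianPDF 0 1 x * gaussianPDF 0 1 y
      = ENNReal.ofReal (((Real.sqrt (2 * π))⁻¹) ^ 2 * Real.exp (-(x ^ 2 + y ^ 2) / 2)) := by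
  rw [gaussianPDF, gaussianPDF, ← ENNReal.ofReal_mul (gaussianPDFReal_nonneg _ _ _)]
  congr 1
  simp only [gaussianPDFReal, NNReal.coe_one, mul_one, sub_zero]
  calc (√(2*π))⁻¹ * rexp (-x^2/2) * ((√(2*π))⁻¹ * rexp (-y^2/2))
      = ((√(2*π))⁻¹)^2 * (rexp (-x^2/2) * rexp (-y^2/2)) := by ring
    _ = ((√(2*π))⁻¹)^2 * rexp (-(x^2+y^2)/2) := by rw [← Real.exp_add]; congr 1; ring

lemma sag_lintegral_polar (f : ℝ × ℝ → ENNReal) :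
    ∫⁻ p in polarCoord.target, ENNReal.ofReal p.1 * f (polarCoord.symm p) = ∫⁻ p, f p := by
  set B : ℝ × ℝ → ℝ × ℝ →L[ℝ] ℝ × ℝ := fun p =>
    LinearMap.toContinuousLinearMap (Matrix.toLin (Module.Basis.finTwoProd ℝ) (Module.Basis.finTwoProd ℝ)
      !![cos p.2, -p.1 * sin p.2; sin p.2, p.1 * cos p.2]) with hB
  have B_det : ∀ p, (B p).det = p.1 := by
    intro p
    conv_rhs => rw [← one_mul p.1, ← cos_sq_add_sin_sq p.2]
    simp only [hB, neg_mul, LinearMap.det_toContinuousLinearMap, LinearMap.det_toLin,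
      Matrix.det_fin_two_of, sub_neg_eq_add]
    ring
  have hderiv : ∀ p ∈ polarCoord.target,
      HasFDerivWithinAt polarCoord.symm (B p) polarCoord.target p :=
    fun p _ => (hasFDerivAt_polarCoord_symm p).hasFDerivWithinAt
  have hinj : Set.InjOn polarCoord.symm polarCoord.target := polarCoord.symm.injOn
  symm
  calc
    ∫⁻ p, f p = ∫⁻ p in polarCoord.source, f p := by
      rw [← setLIntegral_univ]
      exact (setLIntegral_congr polarCoord_source_ae_eq_univ.symm)
    _ = ∫⁻ p in polarCoord.symm '' polarCoord.target, f p := by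
      rw [polarCoord.symm_image_target_eq_source]
    _ = ∫⁻ p in polarCoord.target, ENNReal.ofReal |(B p).det| * f (polarCoord.symm p) :=
      lintegral_image_eq_lintegral_abs_det_fderiv_mul volume
        polarCoord.open_target.measurableSet hderiv hinj f
    _ = ∫⁻ p in polarCoord.target, ENNReal.ofReal p.1 * f (polarCoord.symm p) := by
      refine setLIntegral_congr_fun polarCoord.open_target.measurableSet
        (fun p hp => ?_)
      rw [B_det, abs_of_pos]
      rw [polarCoord_target] at hp
      exact hp.1

lemma sag_angle (r t : ℝ) :
    volume {θ : ℝ | θ ∈ Ioo (-π) π ∧ r * Real.sin (2 * θ) ≤ t}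
      = volume {θ : ℝ | θ ∈ Ioo (-π) π ∧ r * Real.sin θ ≤ t} := by
  set A : Set ℝ := {u | r * Real.sin u ≤ t} with hA
  have hAm : MeasurableSet A := measurableSet_le (by fun_prop) measurable_const
  have shift : ∀ a b : ℝ, volume (Ioc a b ∩ A) = volume (Ioc (a - 2*π) (b - 2*π) ∩ A) := by
    intro a b
    have hpre : (fun u => 2*π + u) ⁻¹' (Ioc a b ∩ A) = Ioc (a - 2*π) (b - 2*π) ∩ A := by
      ext u
      simp only [mem_preimage, mem_inter_iff, mem_Ioc, hA, mem_setOf_eq,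
        add_comm (2*π) u, Real.sin_add_two_pi]
      constructor
      · rintro ⟨⟨h1, h2⟩, h3⟩; exact ⟨⟨by linarith, by linarith⟩, h3⟩
      · rintro ⟨⟨h1, h2⟩, h3⟩; exact ⟨⟨by linarith, by linarith⟩, h3⟩
    rw [← hpre, measure_preimage_add]
  have hIoo_Ioc : ∀ a b : ℝ, volume (Ioo a b ∩ A) = volume (Ioc a b ∩ A) := fun a b =>
    measure_congr (MeasureTheory.Ioo_ae_eq_Ioc.inter (Filter.EventuallyEq.refl _ _))
  have split : ∀ a b c : ℝ, a ≤ b → b ≤ c →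
      volume (Ioc a c ∩ A) = volume (Ioc a b ∩ A) + volume (Ioc b c ∩ A) := by
    intro a b c hab hbc
    rw [← Set.Ioc_union_Ioc_eq_Ioc hab hbc, Set.union_inter_distrib_right]
    exact measure_union ((Set.Ioc_disjoint_Ioc_of_le le_rfl).mono inter_subset_left inter_subset_left)
      (measurableSet_Ioc.inter hAm)
  have hpi : (0:ℝ) < π := Real.pi_pos
  -- left side
  have hset1 : {θ : ℝ | θ ∈ Ioo (-π) π ∧ r * Real.sin (2 * θ) ≤ t}
      = (fun θ : ℝ => 2 * θ) ⁻¹' (Ioo (-(2*π)) (2*π) ∩ A) := by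
    ext θ
    simp only [mem_setOf_eq, mem_preimage, mem_inter_iff, mem_Ioo, hA]
    constructor
    · rintro ⟨⟨h1, h2⟩, h3⟩; exact ⟨⟨by linarith, by linarith⟩, h3⟩
    · rintro ⟨⟨h1, h2⟩, h3⟩; exact ⟨⟨by linarith, by linarith⟩, h3⟩
  have hval : volume (Ioc (-(2*π)) (2*π) ∩ A) = volume (Ioc 0 (2*π) ∩ A)
      + volume (Ioc 0 (2*π) ∩ A) := by
    rw [split (-(2*π)) 0 (2*π) (by linarith) (by linarith)]
    congr 1
    rw [shift 0 (2*π)]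
    norm_num
  have hfin : volume (Ioc (0:ℝ) (2*π) ∩ A) ≠ ⊤ := by
    refine ne_top_of_le_ne_top ?_ (measure_mono inter_subset_left)
    simp [Real.volume_Ioc, ENNReal.mul_eq_top]
  calc
    volume {θ : ℝ | θ ∈ Ioo (-π) π ∧ r * Real.sin (2 * θ) ≤ t}
        = ENNReal.ofReal |(2:ℝ)⁻¹| * volume (Ioo (-(2*π)) (2*π) ∩ A) := by
          rw [hset1, Real.volume_preimage_mul_left two_ne_zero]
    _ = ENNReal.ofReal |(2:ℝ)⁻¹| * (volume (Ioc 0 (2*π) ∩ A) + volume (Ioc 0 (2*π) ∩ A)) := by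
          rw [hIoo_Ioc, hval]
    _ = volume (Ioc (0:ℝ) (2*π) ∩ A) := by
          rw [← two_mul]
          rw [show |(2:ℝ)⁻¹| = 2⁻¹ by norm_num, ENNReal.ofReal_inv_of_pos two_pos]
          rw [← mul_assoc]
          norm_num [ENNReal.inv_mul_cancel]
    _ = volume (Ioc (0:ℝ) π ∩ A) + volume (Ioc (-π) 0 ∩ A) := by
          rw [split 0 π (2*π) hpi.le (by linarith), shift π (2*π)]
          norm_num
          rw [show π - 2*π = -π by ring]
    _ = volume (Ioc (-π) π ∩ A) := by
          rw [split (-π) 0 π (by linarith) hpi.le, add_comm]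
    _ = volume {θ : ℝ | θ ∈ Ioo (-π) π ∧ r * Real.sin θ ≤ t} := by
          rw [← hIoo_Ioc]
          congr 1

lemma sag_radial (S : Set (ℝ × ℝ)) (hS : MeasurableSet S) :
    ((gaussianReal 0 1).prod (gaussianReal 0 1)) S
      = ∫⁻ r in Ioi (0:ℝ), ENNReal.ofReal r * sagD r *
          volume {θ : ℝ | θ ∈ Ioo (-π) π ∧ ((r * Real.cos θ, r * Real.sin θ) : ℝ × ℝ) ∈ S} := by
  have hφ : Measurable (gaussianPDF 0 1) := measurable_gaussianPDF 0 1
  have hρ : (gaussianReal 0 1).prod (gaussianReal 0 1)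
      = (volume.prod volume : Measure (ℝ × ℝ)).withDensity
          (fun p => gaussianPDF 0 1 p.1 * gaussianPDF 0 1 p.2) := by
    refine Measure.prod_eq fun s u hs hu => ?_
    rw [withDensity_apply _ (hs.prod hu), ← Measure.prod_restrict,
      lintegral_prod_mul hφ.aemeasurable hφ.aemeasurable,
      ← gaussianReal_apply 0 one_ne_zero s, ← gaussianReal_apply 0 one_ne_zero u]
  have hmap : Measurable (fun q : ℝ × ℝ => ((q.1 * Real.cos q.2, q.1 * Real.sin q.2) : ℝ × ℝ)) := by
    fun_prop
  set T : Set (ℝ × ℝ) := (fun q : ℝ × ℝ => ((q.1 * Real.cos q.2, q.1 * Real.sin q.2) : ℝ × ℝ)) ⁻¹' S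
    with hT
  have hTm : MeasurableSet T := hmap hS
  have step1 : ((gaussianReal 0 1).prod (gaussianReal 0 1)) S
      = ∫⁻ p in polarCoord.target, ENNReal.ofReal p.1 *
          (S.indicator (fun p => gaussianPDF 0 1 p.1 * gaussianPDF 0 1 p.2)) (polarCoord.symm p) := by
    rw [hρ, withDensity_apply _ hS, ← lintegral_indicator hS, ← Measure.volume_eq_prod,
      ← sag_lintegral_polar]
  rw [step1]
  have step2 : ∀ p : ℝ × ℝ, p ∈ polarCoord.target →
      ENNReal.ofReal p.1 *
          (S.indicator (fun p => gaussianPDF 0 1 p.1 * gaussianPDF 0 1 p.2)) (polarCoord.symm p)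
        = T.indicator (fun q => ENNReal.ofReal q.1 * sagD q.1) p := by
    intro p _
    rw [polarCoord_symm_apply]
    by_cases hmem : ((p.1 * Real.cos p.2, p.1 * Real.sin p.2) : ℝ × ℝ) ∈ S
    · rw [Set.indicator_of_mem hmem, Set.indicator_of_mem (by exact hmem)]
      have : (p.1 * Real.cos p.2) ^ 2 + (p.1 * Real.sin p.2) ^ 2 = p.1 ^ 2 := by
        rw [mul_pow, mul_pow, ← mul_add, cos_sq_add_sin_sq, mul_one]
      rw [sag_pdf_prod, this, sagD]
    · rw [Set.indicator_of_notMem hmem, Set.indicator_of_notMem (by exact hmem), mul_zero]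
  rw [setLIntegral_congr_fun polarCoord.open_target.measurableSet
    step2]
  rw [polarCoord_target, Measure.volume_eq_prod, ← Measure.prod_restrict]
  rw [lintegral_prod (T.indicator (fun q : ℝ × ℝ => ENNReal.ofReal q.1 * sagD q.1)) (((measurable_fst.ennreal_ofReal.mul (by
      unfold sagD; fun_prop)).indicator hTm).aemeasurable)]
  refine setLIntegral_congr_fun measurableSet_Ioi (fun r hr => ?_)
  have hsec : ∀ θ : ℝ, T.indicator (fun q : ℝ × ℝ => ENNReal.ofReal q.1 * sagD q.1) (r, θ)
      = (ENNReal.ofReal r * sagD r) *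
          ({θ : ℝ | ((r * Real.cos θ, r * Real.sin θ) : ℝ × ℝ) ∈ S}).indicator 1 θ := by
    intro θ
    by_cases hmem : ((r * Real.cos θ, r * Real.sin θ) : ℝ × ℝ) ∈ S
    · rw [Set.indicator_of_mem (by exact hmem), Set.indicator_of_mem (by exact hmem)]
      simp
    · rw [Set.indicator_of_notMem (by exact hmem), Set.indicator_of_notMem (by exact hmem),
        mul_zero]
  simp_rw [hsec]
  have hsecm : MeasurableSet {θ : ℝ | ((r * Real.cos θ, r * Real.sin θ) : ℝ × ℝ) ∈ S} := by
    exact (by fun_prop : Measurable fun θ : ℝ => ((r * Real.cos θ, r * Real.sin θ) : ℝ × ℝ)) hS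
  rw [lintegral_const_mul' _ _ (by
      refine ENNReal.mul_ne_top ENNReal.ofReal_ne_top ?_
      simp [sagD]),
    lintegral_indicator_one hsecm, Measure.restrict_apply hsecm]
  congr 1
  rw [Set.inter_comm]
  rfl

theorem signal_alignment_gaussian
    {Ω : Type*} [MeasurableSpace Ω] (μ : Measure Ω) [IsProbabilityMeasure μ]
    (hk hk' : Ω → ℝ)
    (h1 : Measure.map hk μ = gaussianReal 0 1)
    (h2 : Measure.map hk' μ = gaussianReal 0 1)
    (hindep : IndepFun hk hk' μ) :
    Measure.map (fun ω => 2 * hk ω * hk' ω / Real.sqrt ((hk ω) ^ 2 + (hk' ω) ^ 2)) μ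
      = gaussianReal 0 1 := by
  have hF : Measurable (fun p : ℝ × ℝ => 2 * p.1 * p.2 / Real.sqrt (p.1 ^ 2 + p.2 ^ 2)) := by
    fun_prop
  have hne : (gaussianReal 0 1 : Measure ℝ) ≠ 0 := IsProbabilityMeasure.ne_zero _
  have hhk : AEMeasurable hk μ := by
    by_contra h
    exact hne (h1 ▸ Measure.map_of_not_aemeasurable h)
  have hhk' : AEMeasurable hk' μ := by
    by_contra h
    exact hne (h2 ▸ Measure.map_of_not_aemeasurable h)
  have hpair : Measure.map (fun ω => (hk ω, hk' ω)) μ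
      = (gaussianReal 0 1).prod (gaussianReal 0 1) := by
    rw [(indepFun_iff_map_prod_eq_prod_map_map hhk hhk').mp hindep, h1, h2]
  have hcomp : Measure.map (fun ω => 2 * hk ω * hk' ω / Real.sqrt ((hk ω) ^ 2 + (hk' ω) ^ 2)) μ
      = Measure.map (fun p : ℝ × ℝ => 2 * p.1 * p.2 / Real.sqrt (p.1 ^ 2 + p.2 ^ 2))
          ((gaussianReal 0 1).prod (gaussianReal 0 1)) := by
    rw [← hpair, AEMeasurable.map_map_of_aemeasurable (hF.aemeasurable) (hhk.prodMk hhk')]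
    rfl
  rw [hcomp]
  haveI : IsProbabilityMeasure (Measure.map
      (fun p : ℝ × ℝ => 2 * p.1 * p.2 / Real.sqrt (p.1 ^ 2 + p.2 ^ 2))
      ((gaussianReal 0 1).prod (gaussianReal 0 1))) :=
    Measure.isProbabilityMeasure_map hF.aemeasurable
  refine Measure.ext_of_Iic _ _ fun t => ?_
  rw [Measure.map_apply hF measurableSet_Iic]
  rw [sag_radial _ (hF measurableSet_Iic)]
  have hsnd : ((gaussianReal 0 1).prod (gaussianReal 0 1)) (Prod.snd ⁻¹' Iic t)
      = gaussianReal 0 1 (Iic t) := by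
    have : (Prod.snd ⁻¹' Iic t : Set (ℝ × ℝ)) = univ ×ˢ Iic t := by
      ext p; simp
    rw [this, Measure.prod_prod, measure_univ, one_mul]
  rw [← hsnd, sag_radial _ (measurable_snd measurableSet_Iic)]
  refine setLIntegral_congr_fun measurableSet_Ioi (fun r hr => ?_)
  have hr0 : (0:ℝ) < r := hr
  congr 1
  have hFval : ∀ θ : ℝ, 2 * (r * Real.cos θ) * (r * Real.sin θ) /
      Real.sqrt ((r * Real.cos θ) ^ 2 + (r * Real.sin θ) ^ 2) = r * Real.sin (2 * θ) := by
    intro θ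
    have hsq : (r * Real.cos θ) ^ 2 + (r * Real.sin θ) ^ 2 = r ^ 2 := by
      rw [mul_pow, mul_pow, ← mul_add, cos_sq_add_sin_sq, mul_one]
    rw [hsq, Real.sqrt_sq hr0.le, Real.sin_two_mul]
    field_simp
  have h1' : {θ : ℝ | θ ∈ Ioo (-π) π ∧
        ((r * Real.cos θ, r * Real.sin θ) : ℝ × ℝ) ∈
          (fun p : ℝ × ℝ => 2 * p.1 * p.2 / Real.sqrt (p.1 ^ 2 + p.2 ^ 2)) ⁻¹' Iic t}
      = {θ : ℝ | θ ∈ Ioo (-π) π ∧ r * Real.sin (2 * θ) ≤ t} := by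
    ext θ
    simp only [mem_setOf_eq, mem_preimage, mem_Iic, hFval θ]
  have h2' : {θ : ℝ | θ ∈ Ioo (-π) π ∧
        ((r * Real.cos θ, r * Real.sin θ) : ℝ × ℝ) ∈ (Prod.snd ⁻¹' Iic t : Set (ℝ × ℝ))}
      = {θ : ℝ | θ ∈ Ioo (-π) π ∧ r * Real.sin θ ≤ t} := by
    ext θ
    simp only [mem_setOf_eq, mem_preimage, mem_Iic]
  rw [h1', h2', sag_angle]
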